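/- Let λ > 0 and let f = h + conj∘g belong to Ω_H^0(λ), where a_n = h^{(n)}(0)/n! and b_n = g^{(n)}(0)/n! are the Taylor coefficients of h and g at 0. Then for every integer n ≥ 2, |a_n| ≤ λ/(n − 1) and |b_n| ≤ λ/(n − 1). -/

import Mathlib

open Complex

noncomputable section

/-- The open unit disk in the complex plane. -/
def unitDisk : Set ℂ := {z : ℂ | ‖z‖ < 1}

/-- The class `Ω_H^0(λ)` of harmonic mappings `f = h + conj ∘ g`. -/
def OmegaH0 (lam : ℝ) (h g : ℂ → ℂ) : Prop :=
  AnalyticOnNhd ℂ h unitDisk ∧ AnalyticOnNhd ℂ g unitDisk ∧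
    h 0 = 0 ∧ deriv h 0 = 1 ∧ g 0 = 0 ∧ deriv g 0 = 0 ∧
    ∀ z ∈ unitDisk,
      ‖h z - z * deriv h z‖ < lam - ‖g z - z * deriv g z‖

/-- The `n`-th Taylor coefficient of `f` at the origin. -/
def taylorCoef (f : ℂ → ℂ) (n : ℕ) : ℂ := iteratedDeriv n f 0 / n.factorial

lemma isOpen_unitDisk : IsOpen unitDisk := by
  have : unitDisk = Metric.ball (0 : ℂ) 1 := by
    ext z; simp [unitDisk, Complex.dist_eq]
  rw [this]; exact Metric.isOpen_ball

lemma analyticOnNhd_iteratedDeriv (F : ℂ → ℂ) (hF : AnalyticOnNhd ℂ F unitDisk) (n : ℕ) :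
    AnalyticOnNhd ℂ (iteratedDeriv n F) unitDisk := by
  induction n with
  | zero => simpa [iteratedDeriv_zero] using hF
  | succ n ih => rw [iteratedDeriv_succ]; exact ih.deriv

/-- Iterated derivative of `z ↦ F z - z F' z` on the unit disk. -/
lemma iteratedDeriv_sub_id_mul_deriv (F : ℂ → ℂ) (hF : AnalyticOnNhd ℂ F unitDisk) (n : ℕ) :
    ∀ z ∈ unitDisk, iteratedDeriv n (fun w => F w - w * deriv F w) z
      = (1 - (n : ℂ)) * iteratedDeriv n F z - z * iteratedDeriv (n + 1) F z := by
  induction n with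
  | zero =>
    intro z _
    simp [iteratedDeriv_zero, iteratedDeriv_one]
  | succ n ih =>
    intro z hz
    have hev : iteratedDeriv n (fun w => F w - w * deriv F w) =ᶠ[nhds z]
        fun w => (1 - (n : ℂ)) * iteratedDeriv n F w - w * iteratedDeriv (n + 1) F w := by
      filter_upwards [isOpen_unitDisk.mem_nhds hz] with w hw using ih w hw
    have hG : DifferentiableAt ℂ (iteratedDeriv n F) z :=
      (analyticOnNhd_iteratedDeriv F hF n z hz).differentiableAt
    have hH : DifferentiableAt ℂ (iteratedDeriv (n + 1) F) z :=
      (analyticOnNhd_iteratedDeriv F hF (n + 1) z hz).differentiableAt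
    have hdG : deriv (iteratedDeriv n F) z = iteratedDeriv (n + 1) F z := by
      rw [← iteratedDeriv_succ]
    have hdH : deriv (iteratedDeriv (n + 1) F) z = iteratedDeriv (n + 2) F z := by
      rw [← iteratedDeriv_succ]
    rw [iteratedDeriv_succ, hev.deriv_eq,
      deriv_fun_sub ((differentiableAt_const _).fun_mul hG) (differentiableAt_fun_id.fun_mul hH),
      deriv_const_mul _ hG, deriv_fun_mul differentiableAt_fun_id hH]
    simp only [deriv_id'', one_mul, hdG, hdH]
    push_cast
    ring

/-- Cauchy estimate on a circle of radius `r < 1`. -/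
lemma coeff_bound_aux (F : ℂ → ℂ) (lam : ℝ) (hF : AnalyticOnNhd ℂ F unitDisk)
    (hb : ∀ z ∈ unitDisk, ‖F z‖ ≤ lam) {r : NNReal} (hr0 : 0 < r)
    (hr1 : (r : ℝ) < 1) (n : ℕ) :
    ‖iteratedDeriv n F 0‖ ≤ n.factorial * lam / (r : ℝ) ^ n := by
  have hlam : 0 ≤ lam := le_trans (norm_nonneg _) (hb 0 (by simp [unitDisk]))
  have hsub : Metric.closedBall (0 : ℂ) r ⊆ unitDisk := by
    intro z hz
    simp only [Metric.mem_closedBall, Complex.dist_eq, sub_zero] at hz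
    exact lt_of_le_of_lt hz hr1
  have hdiff : DifferentiableOn ℂ F (Metric.closedBall 0 r) :=
    fun z hz => ((hF z (hsub hz)).differentiableAt).differentiableWithinAt
  have hps := hdiff.hasFPowerSeriesOnBall hr0
  set p := cauchyPowerSeries F 0 r with hp
  have h1 : iteratedDeriv n F 0 = n.factorial • p n (fun _ => (1 : ℂ)) := by
    rw [hps.factorial_smul (1 : ℂ) n, iteratedFDeriv_apply_eq_iteratedDeriv_mul_prod]
    simp
  -- bound the integral
  have hcont : Continuous fun θ : ℝ => ‖F (circleMap 0 r θ)‖ := by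
    have : Continuous fun θ : ℝ => F (circleMap 0 r θ) := by
      apply continuous_iff_continuousAt.2
      intro θ
      have hmem : circleMap 0 r θ ∈ unitDisk := by
        simp only [unitDisk, Set.mem_setOf_eq, norm_circleMap_zero, _root_.abs_of_nonneg r.coe_nonneg]
        exact hr1
      exact ((hF _ hmem).continuousAt).comp (continuous_circleMap 0 r).continuousAt
    exact this.norm
  have hint : (∫ θ : ℝ in (0 : ℝ)..2 * Real.pi, ‖F (circleMap 0 r θ)‖)
      ≤ 2 * Real.pi * lam := by
    have h2 : (∫ θ : ℝ in (0 : ℝ)..2 * Real.pi, ‖F (circleMap 0 r θ)‖)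
        ≤ ∫ _θ : ℝ in (0 : ℝ)..2 * Real.pi, lam := by
      apply intervalIntegral.integral_mono_on Real.two_pi_pos.le
        (hcont.intervalIntegrable _ _) intervalIntegrable_const
      intro θ _
      have hmem : circleMap 0 r θ ∈ unitDisk := by
        simp only [unitDisk, Set.mem_setOf_eq, norm_circleMap_zero, _root_.abs_of_nonneg r.coe_nonneg]
        exact hr1
      simpa using hb _ hmem
    simpa using h2.trans_eq (by simp [mul_comm])
  have h2 : ‖p n‖ ≤ lam * ((r : ℝ)⁻¹) ^ n := by
    refine (norm_cauchyPowerSeries_le F 0 r n).trans ?_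
    have habs : |(r : ℝ)| = (r : ℝ) := _root_.abs_of_nonneg r.2
    rw [habs]
    refine mul_le_mul_of_nonneg_right ?_ (by positivity)
    calc (2 * Real.pi)⁻¹ * ∫ θ : ℝ in (0 : ℝ)..2 * Real.pi, ‖F (circleMap 0 r θ)‖
        ≤ (2 * Real.pi)⁻¹ * (2 * Real.pi * lam) := by
          refine mul_le_mul_of_nonneg_left hint (by positivity)
      _ = lam := by field_simp
  have h3 : ‖p n fun _ => (1 : ℂ)‖ ≤ ‖p n‖ := by
    have := (p n).le_opNorm fun _ => (1 : ℂ)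
    simpa using this
  have hr0' : (0 : ℝ) < (r : ℝ) := hr0
  calc ‖iteratedDeriv n F 0‖ = (n.factorial : ℝ) * ‖p n fun _ => (1 : ℂ)‖ := by
        rw [h1, nsmul_eq_mul, norm_mul, Complex.norm_natCast]
    _ ≤ (n.factorial : ℝ) * (lam * ((r : ℝ)⁻¹) ^ n) :=
        mul_le_mul_of_nonneg_left (h3.trans h2) (by positivity)
    _ = n.factorial * lam / (r : ℝ) ^ n := by
        rw [inv_pow]
        field_simp

/-- Cauchy estimate: if `|F| ≤ lam` on the unit disk then `|F⁽ⁿ⁾(0)| ≤ n! lam`. -/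
lemma coeff_bound (F : ℂ → ℂ) (lam : ℝ) (hF : AnalyticOnNhd ℂ F unitDisk)
    (hb : ∀ z ∈ unitDisk, ‖F z‖ ≤ lam) (n : ℕ) :
    ‖iteratedDeriv n F 0‖ ≤ n.factorial * lam := by
  have key : ∀ r : ℝ, r ∈ Set.Ioo (0 : ℝ) 1 →
      ‖iteratedDeriv n F 0‖ ≤ n.factorial * lam / r ^ n := by
    intro r hr
    lift r to NNReal using hr.1.le
    exact coeff_bound_aux F lam hF hb (by exact_mod_cast hr.1) hr.2 n
  have tend : Filter.Tendsto (fun r : ℝ => (n.factorial : ℝ) * lam / r ^ n)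
      (nhdsWithin 1 (Set.Iio 1)) (nhds ((n.factorial : ℝ) * lam)) := by
    have h1 : Filter.Tendsto (fun r : ℝ => (n.factorial : ℝ) * lam / r ^ n)
        (nhds 1) (nhds ((n.factorial : ℝ) * lam / 1 ^ n)) :=
      Filter.Tendsto.div tendsto_const_nhds ((continuous_pow n).tendsto 1) (by simp)
    simpa using h1.mono_left nhdsWithin_le_nhds
  refine ge_of_tendsto tend ?_
  filter_upwards [Ioo_mem_nhdsLT_of_mem
    (show (1 : ℝ) ∈ Set.Ioc (0 : ℝ) 1 by norm_num)] with r hr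
  exact key r hr

theorem stmt7 (lam : ℝ) (hlam : 0 < lam) (h g : ℂ → ℂ) (hf : OmegaH0 lam h g) :
    ∀ n : ℕ, 2 ≤ n →
      ‖taylorCoef h n‖ ≤ lam / ((n : ℝ) - 1) ∧
      ‖taylorCoef g n‖ ≤ lam / ((n : ℝ) - 1) := by
  obtain ⟨hh, hg, -, -, -, -, hineq⟩ := hf
  have main : ∀ F : ℂ → ℂ, AnalyticOnNhd ℂ F unitDisk →
      (∀ z ∈ unitDisk, ‖F z - z * deriv F z‖ ≤ lam) →
      ∀ n : ℕ, 2 ≤ n → ‖taylorCoef F n‖ ≤ lam / ((n : ℝ) - 1) := by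
    intro F hF hb n hn
    have hphi : AnalyticOnNhd ℂ (fun w => F w - w * deriv F w) unitDisk :=
      hF.sub (analyticOnNhd_id.mul hF.deriv)
    have hcb := coeff_bound _ lam hphi hb n
    have hid := iteratedDeriv_sub_id_mul_deriv F hF n 0 (by simp [unitDisk])
    rw [hid] at hcb
    simp only [zero_mul, sub_zero] at hcb
    rw [norm_mul] at hcb
    have habs1 : ‖1 - (n : ℂ)‖ = (n : ℝ) - 1 := by
      have : (1 - (n : ℂ)) = (((1 : ℝ) - n : ℝ) : ℂ) := by push_cast; ring
      rw [this, Complex.norm_real, Real.norm_eq_abs, abs_of_nonpos (by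
        have : (2 : ℝ) ≤ n := by exact_mod_cast hn
        linarith)]
      ring
    rw [habs1] at hcb
    have hn1 : (0 : ℝ) < (n : ℝ) - 1 := by
      have : (2 : ℝ) ≤ n := by exact_mod_cast hn
      linarith
    have hfact : (0 : ℝ) < (n.factorial : ℝ) := by positivity
    unfold taylorCoef
    rw [norm_div]
    have : ‖((n.factorial : ℂ))‖ = (n.factorial : ℝ) := by
      rw [Complex.norm_natCast]
    rw [this]
    rw [div_le_div_iff₀ hfact hn1]
    nlinarith [hcb]
  intro n hn
  constructor
  · refine main h hh (fun z hz => ?_) n hn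
    have := hineq z hz
    have h0 : 0 ≤ ‖g z - z * deriv g z‖ := norm_nonneg _
    linarith
  · refine main g hg (fun z hz => ?_) n hn
    have := hineq z hz
    have h0 : 0 ≤ ‖h z - z * deriv h z‖ := norm_nonneg _
    linarith
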